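/- Let Q be an open subset of ℝ^m and let (uⁿ) be a sequence of measurable functions uⁿ : Q → ℝ such that: (a) for every compact K ⊂ Q the sequence (uⁿ) is uniformly integrable on K and uⁿ → u weakly in L¹(K), i.e. ∫_K uⁿ φ → ∫_K u φ for every φ ∈ L^∞(K); and (b) χ(ξ, uⁿ(z)) → g(z,ξ) weak-* in L^∞(Q × ℝ), i.e. ∫_{Q×ℝ} χ(ξ,uⁿ(z)) ψ(z,ξ) dz dξ → ∫_{Q×ℝ} g(z,ξ) ψ(z,ξ) dz dξ for every ψ ∈ L¹(Q × ℝ), for some g ∈ L^∞(Q × ℝ). Then: (i) for almost every (z,ξ), 0 ≤ g(z,ξ) ≤ 1 when ξ ≥ 0 and −1 ≤ g(z,ξ) ≤ 0 when ξ ≤ 0; (ii) for every compact K ⊂ Q, ∫_K ∫_ℝ |g(z,ξ)| dξ dz ≤ liminf_n ∫_K |uⁿ(z)| dz, so that ξ ↦ g(z,ξ) is integrable for almost every z; and (iii) ∫_ℝ g(z,ξ) dξ = u(z) for almost every z ∈ Q. -/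

import Mathlib

open MeasureTheory
open scoped ENNReal

/-- The kinetic function `χ(ξ,u)`: equal to `1` for `0 < ξ < u`, `−1` for `u < ξ < 0`,
and `0` otherwise. -/
noncomputable def kineticChi (ξ u : ℝ) : ℝ :=
  if 0 < ξ ∧ ξ < u then 1 else if u < ξ ∧ ξ < 0 then -1 else 0


lemma chi_eq (ξ v : ℝ) : kineticChi ξ v =
    (Set.Ioo 0 v).indicator (fun _ => (1:ℝ)) ξ - (Set.Ioo v 0).indicator (fun _ => (1:ℝ)) ξ := by
  unfold kineticChi
  by_cases h1 : 0 < ξ ∧ ξ < v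
  · have h2 : ξ ∉ Set.Ioo v 0 := fun h => absurd h.2 (not_lt.2 h1.1.le)
    simp [h1, Set.indicator_of_mem (Set.mem_Ioo.2 h1), Set.indicator_of_notMem h2]
  · by_cases h2 : v < ξ ∧ ξ < 0
    · have h1' : ξ ∉ Set.Ioo 0 v := fun h => absurd h.1 (not_lt.2 h2.2.le)
      simp [h1, h2, Set.indicator_of_notMem h1', Set.indicator_of_mem (Set.mem_Ioo.2 h2)]
    · have h1' : ξ ∉ Set.Ioo 0 v := fun h => h1 ⟨h.1, h.2⟩
      have h2' : ξ ∉ Set.Ioo v 0 := fun h => h2 ⟨h.1, h.2⟩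
      simp [h1, h2, Set.indicator_of_notMem h1', Set.indicator_of_notMem h2']

lemma abs_chi_eq (ξ v : ℝ) : |kineticChi ξ v| =
    (Set.Ioo 0 v).indicator (fun _ => (1:ℝ)) ξ + (Set.Ioo v 0).indicator (fun _ => (1:ℝ)) ξ := by
  unfold kineticChi
  by_cases h1 : 0 < ξ ∧ ξ < v
  · have h2 : ξ ∉ Set.Ioo v 0 := fun h => absurd h.2 (not_lt.2 h1.1.le)
    simp [h1, Set.indicator_of_mem (Set.mem_Ioo.2 h1), Set.indicator_of_notMem h2]
  · by_cases h2 : v < ξ ∧ ξ < 0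
    · have h1' : ξ ∉ Set.Ioo 0 v := fun h => absurd h.1 (not_lt.2 h2.2.le)
      simp [h1, h2, Set.indicator_of_notMem h1', Set.indicator_of_mem (Set.mem_Ioo.2 h2)]
    · have h1' : ξ ∉ Set.Ioo 0 v := fun h => h1 ⟨h.1, h.2⟩
      have h2' : ξ ∉ Set.Ioo v 0 := fun h => h2 ⟨h.1, h.2⟩
      simp [h1, h2, Set.indicator_of_notMem h1', Set.indicator_of_notMem h2']

lemma abs_chi_le_one (ξ v : ℝ) : |kineticChi ξ v| ≤ 1 := by
  rw [abs_chi_eq]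
  have h : ¬ (ξ ∈ Set.Ioo 0 v ∧ ξ ∈ Set.Ioo v 0) := by
    rintro ⟨h1, h2⟩; exact absurd h2.2 (not_lt.2 h1.1.le)
  by_cases h1 : ξ ∈ Set.Ioo 0 v
  · simp [Set.indicator_of_mem h1, Set.indicator_of_notMem (fun h2 => h ⟨h1, h2⟩)]
  · by_cases h2 : ξ ∈ Set.Ioo v 0 <;>
      simp [Set.indicator_of_notMem h1, h2, Set.indicator_of_mem, Set.indicator_of_notMem]


lemma chi_nonneg_of_nonneg {ξ : ℝ} (v : ℝ) (h : 0 ≤ ξ) : 0 ≤ kineticChi ξ v := by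
  unfold kineticChi
  split_ifs with h1 h2
  · norm_num
  · exact absurd h2.2 (not_lt.2 h)
  · exact le_refl 0

lemma chi_nonpos_of_nonpos {ξ : ℝ} (v : ℝ) (h : ξ ≤ 0) : kineticChi ξ v ≤ 0 := by
  unfold kineticChi
  split_ifs with h1 h2
  · exact absurd h1.1 (not_lt.2 h)
  · norm_num
  · exact le_refl 0

lemma measurable_chi : Measurable (fun p : ℝ × ℝ => kineticChi p.1 p.2) := by
  unfold kineticChi
  have h1 : MeasurableSet {p : ℝ × ℝ | 0 < p.1 ∧ p.1 < p.2} := by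
    apply MeasurableSet.inter
    · exact measurableSet_lt measurable_const measurable_fst
    · exact measurableSet_lt measurable_fst measurable_snd
  have h2 : MeasurableSet {p : ℝ × ℝ | p.2 < p.1 ∧ p.1 < 0} := by
    apply MeasurableSet.inter
    · exact measurableSet_lt measurable_snd measurable_fst
    · exact measurableSet_lt measurable_fst measurable_const
  exact Measurable.ite h1 measurable_const (Measurable.ite h2 measurable_const measurable_const)

lemma chi_zero_of_abs_le {ξ v : ℝ} (h : |v| ≤ |ξ|) : kineticChi ξ v = 0 := by
  unfold kineticChi
  split_ifs with h1 h2
  · exact absurd h (not_le.2 (by rw [abs_of_pos h1.1, abs_of_pos (h1.1.trans h1.2)]; exact h1.2))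
  · have hv : v < 0 := h2.1.trans h2.2
    exact absurd h (not_le.2 (by rw [abs_of_neg h2.2, abs_of_neg hv]; linarith [h2.1]))
  · rfl
lemma chi_integrable (v : ℝ) : Integrable (fun ξ => kineticChi ξ v) := by
  have h1 : Integrable ((Set.Ioo (0:ℝ) v).indicator (fun _ => (1:ℝ))) := by
    rw [integrable_indicator_iff measurableSet_Ioo]
    exact integrableOn_const (measure_Ioo_lt_top).ne
  have h2 : Integrable ((Set.Ioo v (0:ℝ)).indicator (fun _ => (1:ℝ))) := by
    rw [integrable_indicator_iff measurableSet_Ioo]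
    exact integrableOn_const (measure_Ioo_lt_top).ne
  have := h1.sub h2
  exact this.congr (Filter.Eventually.of_forall fun ξ => (chi_eq ξ v).symm)

lemma abs_chi_integrable (v : ℝ) : Integrable (fun ξ => |kineticChi ξ v|) := (chi_integrable v).abs

lemma integral_chi (v : ℝ) : ∫ ξ, kineticChi ξ v = v := by
  have h1 : Integrable ((Set.Ioo (0:ℝ) v).indicator (fun _ => (1:ℝ))) := by
    rw [integrable_indicator_iff measurableSet_Ioo]
    exact integrableOn_const (measure_Ioo_lt_top).ne
  have h2 : Integrable ((Set.Ioo v (0:ℝ)).indicator (fun _ => (1:ℝ))) := by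
    rw [integrable_indicator_iff measurableSet_Ioo]
    exact integrableOn_const (measure_Ioo_lt_top).ne
  have : ∫ ξ, kineticChi ξ v = (∫ ξ, (Set.Ioo (0:ℝ) v).indicator (fun _ => (1:ℝ)) ξ)
      - ∫ ξ, (Set.Ioo v (0:ℝ)).indicator (fun _ => (1:ℝ)) ξ := by
    rw [← integral_sub h1 h2]
    exact integral_congr_ae (Filter.Eventually.of_forall fun ξ => chi_eq ξ v)
  rw [this, integral_indicator_const _ measurableSet_Ioo, integral_indicator_const _ measurableSet_Ioo]
  simp only [measureReal_def, Real.volume_Ioo, smul_eq_mul, one_mul]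
  rcases le_or_gt v 0 with hv | hv
  · rw [ENNReal.ofReal_eq_zero.2 (by linarith), ENNReal.toReal_zero,
      ENNReal.toReal_ofReal (by linarith)]
    linarith
  · rw [ENNReal.toReal_ofReal (by linarith), ENNReal.ofReal_eq_zero.2 (by linarith),
      ENNReal.toReal_zero]
    linarith

lemma integral_abs_chi (v : ℝ) : ∫ ξ, |kineticChi ξ v| = |v| := by
  have h1 : Integrable ((Set.Ioo (0:ℝ) v).indicator (fun _ => (1:ℝ))) := by
    rw [integrable_indicator_iff measurableSet_Ioo]
    exact integrableOn_const (measure_Ioo_lt_top).ne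
  have h2 : Integrable ((Set.Ioo v (0:ℝ)).indicator (fun _ => (1:ℝ))) := by
    rw [integrable_indicator_iff measurableSet_Ioo]
    exact integrableOn_const (measure_Ioo_lt_top).ne
  have : ∫ ξ, |kineticChi ξ v| = (∫ ξ, (Set.Ioo (0:ℝ) v).indicator (fun _ => (1:ℝ)) ξ)
      + ∫ ξ, (Set.Ioo v (0:ℝ)).indicator (fun _ => (1:ℝ)) ξ := by
    rw [← integral_add h1 h2]
    exact integral_congr_ae (Filter.Eventually.of_forall fun ξ => abs_chi_eq ξ v)
  rw [this, integral_indicator_const _ measurableSet_Ioo, integral_indicator_const _ measurableSet_Ioo]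
  simp only [measureReal_def, Real.volume_Ioo, smul_eq_mul, one_mul]
  rcases le_or_gt v 0 with hv | hv
  · rw [ENNReal.ofReal_eq_zero.2 (by linarith), ENNReal.toReal_zero,
      ENNReal.toReal_ofReal (by linarith), abs_of_nonpos hv]
    simp
  · rw [ENNReal.toReal_ofReal (by linarith), ENNReal.ofReal_eq_zero.2 (by linarith),
      ENNReal.toReal_zero, abs_of_pos hv]
    simp

lemma lintegral_abs_chi (v : ℝ) :
    ∫⁻ ξ, ENNReal.ofReal |kineticChi ξ v| = ENNReal.ofReal |v| := by
  rw [← ofReal_integral_eq_lintegral_ofReal (abs_chi_integrable v)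
    (Filter.Eventually.of_forall fun ξ => abs_nonneg _), integral_abs_chi]
-- truncation estimate
lemma trunc_diff {R : ℝ} (hR : 0 ≤ R) (v : ℝ) :
    |(∫ ξ in Set.Icc (-R) R, kineticChi ξ v) - v| ≤ if R ≤ |v| then |v| else 0 := by
  have hint := chi_integrable v
  have hsplit : (∫ ξ in Set.Icc (-R) R, kineticChi ξ v)
      + (∫ ξ in (Set.Icc (-R) R)ᶜ, kineticChi ξ v) = ∫ ξ, kineticChi ξ v :=
    integral_add_compl measurableSet_Icc hint
  rw [integral_chi] at hsplit
  have hkey : (∫ ξ in Set.Icc (-R) R, kineticChi ξ v) - v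
      = - ∫ ξ in (Set.Icc (-R) R)ᶜ, kineticChi ξ v := by linarith
  rw [hkey, abs_neg]
  split_ifs with hRv
  · calc |∫ ξ in (Set.Icc (-R) R)ᶜ, kineticChi ξ v|
        ≤ ∫ ξ in (Set.Icc (-R) R)ᶜ, |kineticChi ξ v| :=
          by simpa [Real.norm_eq_abs] using norm_integral_le_integral_norm (μ := volume.restrict (Set.Icc (-R) R)ᶜ) (fun ξ => kineticChi ξ v)
      _ ≤ ∫ ξ, |kineticChi ξ v| := by
          apply setIntegral_le_integral hint.abs
          exact Filter.Eventually.of_forall fun ξ => abs_nonneg _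
      _ = |v| := integral_abs_chi v
  · push_neg at hRv
    have : ∀ ξ ∈ (Set.Icc (-R) R)ᶜ, kineticChi ξ v = 0 := by
      intro ξ hξ
      simp only [Set.mem_compl_iff, Set.mem_Icc, not_and_or, not_le] at hξ
      apply chi_zero_of_abs_le
      rcases hξ with h | h
      · rw [abs_of_neg (by linarith : ξ < 0)]; linarith
      · rw [abs_of_pos (by linarith : 0 < ξ)]; linarith
    rw [setIntegral_congr_fun measurableSet_Icc.compl this]
    simp
noncomputable def mySign (x : ℝ) : ℝ := if x < 0 then -1 else if 0 < x then 1 else 0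

lemma mySign_measurable : Measurable mySign := by
  unfold mySign
  exact Measurable.ite (measurableSet_lt measurable_id measurable_const) measurable_const
    (Measurable.ite (measurableSet_lt measurable_const measurable_id) measurable_const
      measurable_const)

lemma abs_mySign (x : ℝ) : |mySign x| ≤ 1 := by
  unfold mySign; split_ifs <;> norm_num

lemma mul_mySign (x : ℝ) : x * mySign x = |x| := by
  unfold mySign
  split_ifs with h1 h2
  · rw [abs_of_neg h1]; ring
  · rw [abs_of_pos h2]; ring
  · have : x = 0 := le_antisymm (not_lt.1 h2) (not_lt.1 h1)
    simp [this]

/-- If the set integral of a bounded measurable function is nonneg over every finite-measure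
measurable subset of `T`, then the function is a.e. nonneg on `T`. -/
lemma ae_nonneg_on_of_setIntegral {α : Type*} [MeasurableSpace α] (μ : Measure α)
    [SigmaFinite μ] {h : α → ℝ} (hm : Measurable h) {C : ℝ} (hb : ∀ x, |h x| ≤ C)
    {T : Set α} (hT : MeasurableSet T)
    (H : ∀ S : Set α, MeasurableSet S → S ⊆ T → μ S < ∞ → 0 ≤ ∫ x in S, h x ∂μ) :
    ∀ᵐ x ∂μ, x ∈ T → 0 ≤ h x := by
  have key : ∀ k n : ℕ, μ (T ∩ {x | h x ≤ -((k:ℝ)+1)⁻¹} ∩ spanningSets μ n) = 0 := by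
    intro k n
    set S := T ∩ {x | h x ≤ -((k:ℝ)+1)⁻¹} ∩ spanningSets μ n with hS
    have hSm : MeasurableSet S :=
      ((hT.inter (measurableSet_le hm measurable_const)).inter (measurableSet_spanningSets μ n))
    have hST : S ⊆ T := fun x hx => hx.1.1
    have hSfin : μ S < ∞ :=
      lt_of_le_of_lt (measure_mono Set.inter_subset_right) (measure_spanningSets_lt_top μ n)
    have h0 := H S hSm hST hSfin
    have hint : IntegrableOn h S μ := by
      apply Integrable.mono' (integrableOn_const (hSfin).ne : IntegrableOn (fun _ => C) S μ)
        hm.aestronglyMeasurable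
      exact Filter.Eventually.of_forall fun x => by simpa [Real.norm_eq_abs] using hb x
    have hle : ∫ x in S, h x ∂μ ≤ ∫ x in S, (-((k:ℝ)+1)⁻¹) ∂μ := by
      apply setIntegral_mono_on hint (integrableOn_const (hSfin).ne) hSm
      intro x hx; exact hx.1.2
    rw [setIntegral_const] at hle
    simp only [smul_eq_mul, measureReal_def] at hle
    by_contra hne
    have hpos : 0 < (μ S).toReal := ENNReal.toReal_pos hne hSfin.ne
    have : (μ S).toReal * -((k:ℝ)+1)⁻¹ < 0 := by
      apply mul_neg_of_pos_of_neg hpos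
      rw [neg_lt_zero]
      positivity
    linarith
  have hbad : μ (T ∩ {x | h x < 0}) = 0 := by
    have hsub : T ∩ {x | h x < 0} ⊆
        ⋃ k : ℕ, ⋃ n : ℕ, T ∩ {x | h x ≤ -((k:ℝ)+1)⁻¹} ∩ spanningSets μ n := by
      intro x hx
      obtain ⟨k, hk⟩ := exists_nat_gt (-(h x))⁻¹
      have hxneg : h x < 0 := hx.2
      have hk' : h x ≤ -((k:ℝ)+1)⁻¹ := by
        have h1 : (-(h x))⁻¹ ≤ (k:ℝ)+1 := by linarith
        have h2 := inv_anti₀ (inv_pos.2 (by linarith : (0:ℝ) < -(h x))) h1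
        rw [inv_inv] at h2
        linarith
      have hxu : x ∈ ⋃ n, spanningSets μ n := by rw [iUnion_spanningSets]; trivial
      obtain ⟨n, hn⟩ := Set.mem_iUnion.1 hxu
      exact Set.mem_iUnion.2 ⟨k, Set.mem_iUnion.2 ⟨n, ⟨⟨hx.1, hk'⟩, hn⟩⟩⟩
    have hz : μ (⋃ k : ℕ, ⋃ n : ℕ, T ∩ {x | h x ≤ -((k:ℝ)+1)⁻¹} ∩ spanningSets μ n) = 0 :=
      measure_iUnion_null fun k => measure_iUnion_null fun n => key k n
    exact le_antisymm (le_trans (measure_mono hsub) hz.le) (zero_le)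
  rw [ae_iff]
  refine le_antisymm (le_trans (measure_mono ?_) hbad.le) (zero_le)
  intro x hx
  push_neg at hx
  exact ⟨hx.1, hx.2⟩

variable {m : ℕ}
local notation "Em" => EuclideanSpace ℝ (Fin m)

lemma measurable_chiu {u : Em → ℝ} (hu : Measurable u) :
    Measurable (fun p : Em × ℝ => kineticChi p.2 (u p.1)) :=
  measurable_chi.comp (measurable_snd.prodMk (hu.comp measurable_fst))

lemma tendsto_setIntegral_chi (Q : Set Em)
    (u : ℕ → Em → ℝ) (hum : ∀ n, Measurable (u n)) (g : Em × ℝ → ℝ)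
    (hwkchi : ∀ ψ : Em × ℝ → ℝ,
      Integrable ψ (volume.restrict (Q ×ˢ (Set.univ : Set ℝ))) →
        Filter.Tendsto (fun n => ∫ p in Q ×ˢ (Set.univ : Set ℝ),
            kineticChi p.2 (u n p.1) * ψ p) Filter.atTop
          (nhds (∫ p in Q ×ˢ (Set.univ : Set ℝ), g p * ψ p)))
    (S : Set (Em × ℝ)) (hSm : MeasurableSet S) (hSsub : S ⊆ Q ×ˢ (Set.univ : Set ℝ))
    (hSfin : volume S < ∞) :
    Filter.Tendsto (fun n => ∫ p in S, kineticChi p.2 (u n p.1)) Filter.atTop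
      (nhds (∫ p in S, g p)) := by
  set ψ : Em × ℝ → ℝ := S.indicator (fun _ => 1) with hψdef
  have hψ : Integrable ψ (volume.restrict (Q ×ˢ (Set.univ : Set ℝ))) := by
    rw [hψdef, integrable_indicator_iff hSm]
    unfold IntegrableOn
    rw [Measure.restrict_restrict hSm, Set.inter_eq_left.2 hSsub]
    exact integrableOn_const (hSfin).ne
  have key := hwkchi ψ hψ
  have e1 : ∀ F : Em × ℝ → ℝ, (∫ p in Q ×ˢ (Set.univ : Set ℝ), F p * ψ p)
      = ∫ p in S, F p := by
    intro F
    have : ∀ p, F p * ψ p = S.indicator F p := by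
      intro p
      by_cases hp : p ∈ S <;> simp [hψdef, hp]
    rw [integral_congr_ae (Filter.Eventually.of_forall fun p => this p),
      setIntegral_indicator hSm, Set.inter_eq_right.2 hSsub]
  rw [e1] at key
  have e2 : ∀ n, (∫ p in Q ×ˢ (Set.univ : Set ℝ), kineticChi p.2 (u n p.1) * ψ p)
      = ∫ p in S, kineticChi p.2 (u n p.1) := fun n => e1 _
  exact key.congr (fun n => (e2 n))

lemma chi_integrableOn_finite {u : Em → ℝ} (hu : Measurable u) {S : Set (Em × ℝ)}
    (hSfin : volume S < ∞) :
    IntegrableOn (fun p : Em × ℝ => kineticChi p.2 (u p.1)) S := by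
  apply Integrable.mono' (integrableOn_const (hSfin).ne :
      IntegrableOn (fun _ => (1:ℝ)) S _) (measurable_chiu hu).aestronglyMeasurable
  exact Filter.Eventually.of_forall fun p => by
    simpa [Real.norm_eq_abs] using abs_chi_le_one p.2 (u p.1)

lemma partI (Q : Set Em) (hQm : MeasurableSet Q)
    (u : ℕ → Em → ℝ) (hum : ∀ n, Measurable (u n)) (g : Em × ℝ → ℝ)
    (hgm : Measurable g) (hgb : ∃ C : ℝ, ∀ p, |g p| ≤ C)
    (hwkchi : ∀ ψ : Em × ℝ → ℝ,
      Integrable ψ (volume.restrict (Q ×ˢ (Set.univ : Set ℝ))) →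
        Filter.Tendsto (fun n => ∫ p in Q ×ˢ (Set.univ : Set ℝ),
            kineticChi p.2 (u n p.1) * ψ p) Filter.atTop
          (nhds (∫ p in Q ×ˢ (Set.univ : Set ℝ), g p * ψ p))) :
    ∀ᵐ p ∂(volume.restrict (Q ×ˢ (Set.univ : Set ℝ))),
      (0 ≤ p.2 → 0 ≤ g p ∧ g p ≤ 1) ∧ (p.2 ≤ 0 → -1 ≤ g p ∧ g p ≤ 0) := by
  obtain ⟨C, hC⟩ := hgb
  have hTp : MeasurableSet (Q ×ˢ Set.Ioi (0:ℝ)) := hQm.prod measurableSet_Ioi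
  have hTn : MeasurableSet (Q ×ˢ Set.Iio (0:ℝ)) := hQm.prod measurableSet_Iio
  have hsubp : (Q ×ˢ Set.Ioi (0:ℝ)) ⊆ Q ×ˢ (Set.univ : Set ℝ) :=
    Set.prod_mono_right (Set.subset_univ _)
  have hsubn : (Q ×ˢ Set.Iio (0:ℝ)) ⊆ Q ×ˢ (Set.univ : Set ℝ) :=
    Set.prod_mono_right (Set.subset_univ _)
  have gintS : ∀ S : Set (Em × ℝ), volume S < ∞ → IntegrableOn g S := by
    intro S hSfin
    apply Integrable.mono' (integrableOn_const (hSfin).ne :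
      IntegrableOn (fun _ => C) S _) hgm.aestronglyMeasurable
    exact Filter.Eventually.of_forall fun p => by simpa [Real.norm_eq_abs] using hC p
  -- g ≥ 0 on Q × (0,∞)
  have h1 : ∀ᵐ p : Em × ℝ, p ∈ Q ×ˢ Set.Ioi (0:ℝ) → 0 ≤ g p := by
    apply ae_nonneg_on_of_setIntegral volume hgm hC hTp
    intro S hSm hSsub hSfin
    have htd := tendsto_setIntegral_chi Q u hum g hwkchi S hSm (hSsub.trans hsubp) hSfin
    apply ge_of_tendsto' htd
    intro n
    apply setIntegral_nonneg hSm
    intro p hp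
    exact chi_nonneg_of_nonneg _ (le_of_lt (hSsub hp).2)
  -- g ≤ 1 on Q × (0,∞)
  have h2 : ∀ᵐ p : Em × ℝ, p ∈ Q ×ˢ Set.Ioi (0:ℝ) → 0 ≤ 1 - g p := by
    apply ae_nonneg_on_of_setIntegral volume (measurable_const.sub hgm)
      (C := 1 + C) (fun p => by have := hC p; have := abs_le.1 (hC p); rw [abs_le]; simp only [Pi.sub_apply]; constructor <;> linarith) hTp
    intro S hSm hSsub hSfin
    have htd := tendsto_setIntegral_chi Q u hum g hwkchi S hSm (hSsub.trans hsubp) hSfin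
    have hgle : ∫ p in S, g p ≤ (volume S).toReal := by
      apply le_of_tendsto htd
      apply Filter.Eventually.of_forall
      intro n
      calc ∫ p in S, kineticChi p.2 (u n p.1) ≤ ∫ _ in S, (1:ℝ) := by
            apply setIntegral_mono_on (chi_integrableOn_finite (hum n) hSfin)
              (integrableOn_const (hSfin).ne) hSm
            intro p _
            exact (abs_le.1 (abs_chi_le_one p.2 (u n p.1))).2
        _ = (volume S).toReal := by simp [measureReal_def]
    simp only [Pi.sub_apply]
    rw [integral_sub (integrableOn_const (C := (1:ℝ)) (hSfin).ne) (gintS S hSfin)]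
    simp only [integral_const, measureReal_def, smul_eq_mul, mul_one, Measure.restrict_apply_univ]
    linarith
  -- g ≤ 0 on Q × (-∞,0)
  have h3 : ∀ᵐ p : Em × ℝ, p ∈ Q ×ˢ Set.Iio (0:ℝ) → 0 ≤ -g p := by
    apply ae_nonneg_on_of_setIntegral volume hgm.neg
      (C := C) (fun p => by rw [Pi.neg_apply, abs_neg]; exact hC p) hTn
    intro S hSm hSsub hSfin
    have htd := tendsto_setIntegral_chi Q u hum g hwkchi S hSm (hSsub.trans hsubn) hSfin
    have hgle : ∫ p in S, g p ≤ 0 := by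
      apply le_of_tendsto htd
      apply Filter.Eventually.of_forall
      intro n
      apply setIntegral_nonpos hSm
      intro p hp
      exact chi_nonpos_of_nonpos _ (le_of_lt (hSsub hp).2)
    simp only [Pi.neg_apply]
    rw [integral_neg]
    linarith
  -- g ≥ -1 on Q × (-∞,0)
  have h4 : ∀ᵐ p : Em × ℝ, p ∈ Q ×ˢ Set.Iio (0:ℝ) → 0 ≤ g p + 1 := by
    apply ae_nonneg_on_of_setIntegral volume (hgm.add measurable_const)
      (C := C + 1) (fun p => by have := abs_le.1 (hC p); rw [abs_le]; simp only [Pi.add_apply]; constructor <;> linarith) hTn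
    intro S hSm hSsub hSfin
    have htd := tendsto_setIntegral_chi Q u hum g hwkchi S hSm (hSsub.trans hsubn) hSfin
    have hgge : -(volume S).toReal ≤ ∫ p in S, g p := by
      apply ge_of_tendsto htd
      apply Filter.Eventually.of_forall
      intro n
      calc -(volume S).toReal = ∫ _ in S, (-1:ℝ) := by simp [measureReal_def]
        _ ≤ ∫ p in S, kineticChi p.2 (u n p.1) := by
            apply setIntegral_mono_on (integrableOn_const (hSfin).ne)
              (chi_integrableOn_finite (hum n) hSfin) hSm
            intro p _
            exact (abs_le.1 (abs_chi_le_one p.2 (u n p.1))).1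
    simp only [Pi.add_apply]
    rw [integral_add (gintS S hSfin) (integrableOn_const (C := (1:ℝ)) (hSfin).ne)]
    simp only [integral_const, measureReal_def, smul_eq_mul, mul_one, Measure.restrict_apply_univ]
    linarith
  -- the set ξ = 0 is null
  have hzero : volume {p : Em × ℝ | p.2 = 0} = 0 := by
    have : {p : Em × ℝ | p.2 = 0} = (Set.univ : Set Em) ×ˢ ({0} : Set ℝ) := by
      ext p; constructor
      · intro hp; exact ⟨Set.mem_univ _, hp⟩
      · intro hp; exact hp.2
    rw [this, Measure.volume_eq_prod, Measure.prod_prod]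
    simp
  have hzero' : ∀ᵐ p : Em × ℝ, p.2 ≠ 0 := by
    rw [ae_iff]
    simpa using hzero
  have hglobal : ∀ᵐ p : Em × ℝ, p ∈ Q ×ˢ (Set.univ : Set ℝ) →
      ((0 ≤ p.2 → 0 ≤ g p ∧ g p ≤ 1) ∧ (p.2 ≤ 0 → -1 ≤ g p ∧ g p ≤ 0)) := by
    filter_upwards [h1, h2, h3, h4, hzero'] with p hp1 hp2 hp3 hp4 hp0 hpQ
    have hQp : p.1 ∈ Q := hpQ.1
    constructor
    · intro hge
      have hpos : 0 < p.2 := lt_of_le_of_ne hge (Ne.symm hp0)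
      have hmem : p ∈ Q ×ˢ Set.Ioi (0:ℝ) := ⟨hQp, hpos⟩
      exact ⟨hp1 hmem, by linarith [hp2 hmem]⟩
    · intro hle
      have hneg : p.2 < 0 := lt_of_le_of_ne hle hp0
      have hmem : p ∈ Q ×ˢ Set.Iio (0:ℝ) := ⟨hQp, hneg⟩
      exact ⟨by linarith [hp4 hmem], by linarith [hp3 hmem]⟩
  have hres := ae_restrict_of_ae (μ := volume) (s := Q ×ˢ (Set.univ : Set ℝ)) hglobal
  have hmem := ae_restrict_mem (μ := (volume : Measure (Em × ℝ))) (hQm.prod (MeasurableSet.univ (α := ℝ)))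
  filter_upwards [hres, hmem] with p hp hpmem
  exact hp hpmem

lemma ofReal_abs (x : ℝ) : ENNReal.ofReal |x| = (‖x‖₊ : ℝ≥0∞) := by
  rw [← Real.norm_eq_abs, ← coe_nnnorm, ENNReal.ofReal_coe_nnreal]

lemma tonelli_abs_chi {u : Em → ℝ} (hu : Measurable u) {K : Set Em} (hKm : MeasurableSet K) :
    (∫⁻ p in K ×ˢ (Set.univ : Set ℝ), ENNReal.ofReal |kineticChi p.2 (u p.1)|)
      = ∫⁻ z in K, ENNReal.ofReal |u z| := by
  have h1 : (volume : Measure (Em × ℝ)).restrict (K ×ˢ (Set.univ : Set ℝ))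
      = ((volume : Measure Em).restrict K).prod (volume : Measure ℝ) := by
    rw [Measure.volume_eq_prod, ← Measure.prod_restrict, Measure.restrict_univ]
  rw [h1, lintegral_prod _ (by
    exact ((ENNReal.measurable_ofReal.comp (measurable_chiu hu).abs)).aemeasurable)]
  congr 1
  funext z
  exact lintegral_abs_chi (u z)

lemma partII (Q : Set Em)
    (u : ℕ → Em → ℝ) (hum : ∀ n, Measurable (u n)) (g : Em × ℝ → ℝ)
    (hgm : Measurable g) (hgb : ∃ C : ℝ, ∀ p, |g p| ≤ C)
    (hwkchi : ∀ ψ : Em × ℝ → ℝ,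
      Integrable ψ (volume.restrict (Q ×ˢ (Set.univ : Set ℝ))) →
        Filter.Tendsto (fun n => ∫ p in Q ×ˢ (Set.univ : Set ℝ),
            kineticChi p.2 (u n p.1) * ψ p) Filter.atTop
          (nhds (∫ p in Q ×ˢ (Set.univ : Set ℝ), g p * ψ p)))
    (K : Set Em) (hK : IsCompact K) (hKQ : K ⊆ Q) :
    (∫⁻ p in K ×ˢ (Set.univ : Set ℝ), ENNReal.ofReal |g p|) ≤
      Filter.liminf (fun n => ∫⁻ z in K, ENNReal.ofReal |u n z|) Filter.atTop := by
  obtain ⟨C, hC⟩ := hgb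
  have hKm : MeasurableSet K := hK.measurableSet
  have hKfin : volume K < ∞ := hK.measure_lt_top
  set S : ℕ → Set (Em × ℝ) := fun R => K ×ˢ Set.Icc (-(R:ℝ)) R with hSdef
  have hSm : ∀ R, MeasurableSet (S R) := fun R => hKm.prod measurableSet_Icc
  have hSsub : ∀ R, S R ⊆ Q ×ˢ (Set.univ : Set ℝ) := fun R =>
    Set.prod_mono hKQ (Set.subset_univ _)
  have hSfin : ∀ R, volume (S R) < ∞ := by
    intro R
    rw [hSdef]
    simp only []
    rw [Measure.volume_eq_prod, Measure.prod_prod]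
    exact ENNReal.mul_lt_top hKfin (by simp [Real.volume_Icc])
  -- Step: for each R, lintegral over S R is at most the liminf
  have step : ∀ R : ℕ, (∫⁻ p in S R, ENNReal.ofReal |g p|) ≤
      Filter.liminf (fun n => ∫⁻ z in K, ENNReal.ofReal |u n z|) Filter.atTop := by
    intro R
    set ψ : Em × ℝ → ℝ := (S R).indicator (fun p => mySign (g p)) with hψdef
    have hψint : Integrable ψ (volume.restrict (Q ×ˢ (Set.univ : Set ℝ))) := by
      rw [hψdef, integrable_indicator_iff (hSm R)]
      unfold IntegrableOn
      rw [Measure.restrict_restrict (hSm R), Set.inter_eq_left.2 (hSsub R)]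
      apply Integrable.mono' (integrableOn_const ((hSfin R)).ne :
        IntegrableOn (fun _ => (1:ℝ)) (S R) _)
        ((mySign_measurable.comp hgm).aestronglyMeasurable)
      exact Filter.Eventually.of_forall fun p => by
        simpa [Real.norm_eq_abs] using abs_mySign (g p)
    have key := hwkchi ψ hψint
    -- identify the limit
    have elim : (∫ p in Q ×ˢ (Set.univ : Set ℝ), g p * ψ p) = ∫ p in S R, |g p| := by
      have : ∀ p, g p * ψ p = (S R).indicator (fun p => |g p|) p := by
        intro p
        by_cases hp : p ∈ S R
        · simp [hψdef, hp, Set.indicator_of_mem, mul_mySign]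
        · simp [hψdef, hp]
      rw [integral_congr_ae (Filter.Eventually.of_forall this),
        setIntegral_indicator (hSm R), Set.inter_eq_right.2 (hSsub R)]
    rw [elim] at key
    -- uniform bound on the approximants
    have hbound : ∀ n, ENNReal.ofReal |∫ p in Q ×ˢ (Set.univ : Set ℝ),
        kineticChi p.2 (u n p.1) * ψ p| ≤ ∫⁻ z in K, ENNReal.ofReal |u n z| := by
      intro n
      rw [ofReal_abs]
      calc (‖∫ p in Q ×ˢ (Set.univ : Set ℝ), kineticChi p.2 (u n p.1) * ψ p‖₊ : ℝ≥0∞)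
          ≤ ∫⁻ p in Q ×ˢ (Set.univ : Set ℝ), ‖kineticChi p.2 (u n p.1) * ψ p‖₊ :=
            enorm_integral_le_lintegral_enorm _
        _ ≤ ∫⁻ p in Q ×ˢ (Set.univ : Set ℝ),
              (S R).indicator (fun p => ENNReal.ofReal |kineticChi p.2 (u n p.1)|) p := by
            apply lintegral_mono
            intro p
            show (‖kineticChi p.2 (u n p.1) * ψ p‖₊ : ℝ≥0∞) ≤ _
            rw [← ofReal_abs]
            by_cases hp : p ∈ S R
            · rw [Set.indicator_of_mem hp]
              apply ENNReal.ofReal_le_ofReal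
              rw [abs_mul]
              calc |kineticChi p.2 (u n p.1)| * |ψ p| ≤ |kineticChi p.2 (u n p.1)| * 1 := by
                    apply mul_le_mul_of_nonneg_left _ (abs_nonneg _)
                    rw [hψdef, Set.indicator_of_mem hp]
                    exact abs_mySign _
                _ = _ := mul_one _
            · rw [Set.indicator_of_notMem hp, hψdef, Set.indicator_of_notMem hp]
              simp
        _ = ∫⁻ p in S R, ENNReal.ofReal |kineticChi p.2 (u n p.1)| := by
            rw [lintegral_indicator (hSm R), Measure.restrict_restrict (hSm R),
              Set.inter_eq_left.2 (hSsub R)]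
        _ ≤ ∫⁻ p in K ×ˢ (Set.univ : Set ℝ), ENNReal.ofReal |kineticChi p.2 (u n p.1)| :=
            lintegral_mono_set (Set.prod_mono_right (Set.subset_univ _))
        _ = ∫⁻ z in K, ENNReal.ofReal |u n z| := tonelli_abs_chi (hum n) hKm
    -- pass to the liminf
    have hL : (∫⁻ p in S R, ENNReal.ofReal |g p|) = ENNReal.ofReal (abs (∫ p in S R, |g p|)) := by
      rw [abs_of_nonneg (integral_nonneg (fun p => abs_nonneg _)),
        ofReal_integral_eq_lintegral_ofReal]
      · apply Integrable.mono' (integrableOn_const ((hSfin R)).ne :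
          IntegrableOn (fun _ => C) (S R) _) hgm.abs.aestronglyMeasurable
        exact Filter.Eventually.of_forall fun p => by
          simpa [Real.norm_eq_abs, abs_abs] using hC p
      · exact Filter.Eventually.of_forall fun p => abs_nonneg _
    rw [hL]
    have htd : Filter.Tendsto (fun n => ENNReal.ofReal (abs (∫ p in Q ×ˢ (Set.univ : Set ℝ),
        kineticChi p.2 (u n p.1) * ψ p))) Filter.atTop
        (nhds (ENNReal.ofReal (abs (∫ p in S R, |g p|)))) := by
      exact (ENNReal.continuous_ofReal.tendsto _).comp ((continuous_abs.tendsto _).comp key)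
    rw [← htd.liminf_eq]
    exact Filter.liminf_le_liminf (Filter.Eventually.of_forall hbound)
  -- monotone convergence in R
  have hmono : Monotone (fun R : ℕ => (S R).indicator
      (fun p : Em × ℝ => ENNReal.ofReal |g p|)) := by
    intro a b hab
    apply Set.indicator_le_indicator_of_subset
    · exact Set.prod_mono_right (Set.Icc_subset_Icc (by simp; exact_mod_cast hab)
        (by exact_mod_cast hab))
    · intro p; exact zero_le
  have hcover : (fun p : Em × ℝ => (K ×ˢ (Set.univ : Set ℝ)).indicator
      (fun p => ENNReal.ofReal |g p|) p)
      = fun p => ⨆ R : ℕ, (S R).indicator (fun p => ENNReal.ofReal |g p|) p := by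
    funext p
    by_cases hp : p ∈ K ×ˢ (Set.univ : Set ℝ)
    · rw [Set.indicator_of_mem hp]
      apply le_antisymm
      · obtain ⟨R, hR⟩ := exists_nat_ge |p.2|
        have habs := abs_le.1 hR
        have hpS : p ∈ S R := ⟨hp.1, ⟨habs.1, habs.2⟩⟩
        have hle := le_iSup (fun R => (S R).indicator (fun p => ENNReal.ofReal |g p|) p) R
        rwa [Set.indicator_of_mem hpS] at hle
      · apply iSup_le
        intro R
        by_cases hpR : p ∈ S R
        · rw [Set.indicator_of_mem hpR]
        · rw [Set.indicator_of_notMem hpR]; exact zero_le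
    · have : ∀ R, p ∉ S R := fun R hR => hp ⟨hR.1, Set.mem_univ _⟩
      rw [Set.indicator_of_notMem hp]
      simp [Set.indicator_of_notMem, this]
  calc (∫⁻ p in K ×ˢ (Set.univ : Set ℝ), ENNReal.ofReal |g p|)
      = ∫⁻ p, (K ×ˢ (Set.univ : Set ℝ)).indicator (fun p => ENNReal.ofReal |g p|) p := by
        rw [lintegral_indicator (hKm.prod MeasurableSet.univ)]
    _ = ∫⁻ p, ⨆ R : ℕ, (S R).indicator (fun p => ENNReal.ofReal |g p|) p := by rw [hcover]
    _ = ⨆ R : ℕ, ∫⁻ p, (S R).indicator (fun p => ENNReal.ofReal |g p|) p := by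
        rw [lintegral_iSup (fun R => (hgm.abs.ennreal_ofReal).indicator (hSm R)) hmono]
    _ = ⨆ R : ℕ, ∫⁻ p in S R, ENNReal.ofReal |g p| := by
        congr 1; funext R; rw [lintegral_indicator (hSm R)]
    _ ≤ _ := iSup_le step

lemma lintegral_bound (K : Set Em) (hK : IsCompact K)
    (u : ℕ → Em → ℝ) (hum : ∀ n, Measurable (u n)) (hint : ∀ n, IntegrableOn (u n) K)
    (c : ℝ) (hc : ∀ n, (∫ z in {z ∈ K | c ≤ |u n z|}, |u n z|) < 1) :
    ∀ n, (∫⁻ z in K, ENNReal.ofReal |u n z|) ≤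
      ENNReal.ofReal (1 + max c 0 * (volume K).toReal) := by
  intro n
  have hKm := hK.measurableSet
  have hKfin : volume K < ∞ := hK.measure_lt_top
  set B : Set Em := {z | c ≤ |u n z|} with hBdef
  have hBm : MeasurableSet B := measurableSet_le measurable_const (hum n).abs
  have habs : IntegrableOn (fun z => |u n z|) K := (hint n).abs
  have hsplit := integral_add_compl hBm habs
  have e1 : ∫ z in B, |u n z| ∂(volume.restrict K) = ∫ z in {z ∈ K | c ≤ |u n z|}, |u n z| := by
    rw [Measure.restrict_restrict hBm]
    congr 1
    rw [Set.inter_comm]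
    rfl
  have e2 : ∫ z in Bᶜ, |u n z| ∂(volume.restrict K) ≤ max c 0 * (volume K).toReal := by
    have hmono : ∫ z in Bᶜ, |u n z| ∂(volume.restrict K)
        ≤ ∫ _ in Bᶜ, max c 0 ∂(volume.restrict K) := by
      apply setIntegral_mono_on habs.integrableOn _ hBm.compl
      · intro z hz
        simp only [hBdef, Set.mem_compl_iff, Set.mem_setOf_eq, not_le] at hz
        exact le_trans hz.le (le_max_left _ _)
      · exact integrableOn_const ((lt_of_le_of_lt (measure_mono (Set.subset_univ _))
          (by rwa [Measure.restrict_apply_univ]))).ne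
    refine hmono.trans ?_
    rw [setIntegral_const, smul_eq_mul, mul_comm]
    apply mul_le_mul_of_nonneg_left _ (le_max_right c 0)
    apply ENNReal.toReal_mono hKfin.ne
    exact le_trans (measure_mono (Set.subset_univ _)) (by rw [Measure.restrict_apply_univ])
  have e3 : ∫ z in K, |u n z| ≤ 1 + max c 0 * (volume K).toReal := by
    have := hc n
    rw [← hsplit, e1]
    linarith
  rw [← ofReal_integral_eq_lintegral_ofReal habs
    (Filter.Eventually.of_forall fun z => abs_nonneg _)]
  exact ENNReal.ofReal_le_ofReal e3

lemma partIII_K (g : Em × ℝ → ℝ) (hgm : Measurable g) (K : Set Em) (hKm : MeasurableSet K)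
    (hfin : (∫⁻ p in K ×ˢ (Set.univ : Set ℝ), ENNReal.ofReal |g p|) ≠ ⊤) :
    ∀ᵐ z ∂(volume.restrict K), Integrable (fun ξ : ℝ => g (z, ξ)) := by
  have h1 : (volume : Measure (Em × ℝ)).restrict (K ×ˢ (Set.univ : Set ℝ))
      = ((volume : Measure Em).restrict K).prod (volume : Measure ℝ) := by
    rw [Measure.volume_eq_prod, ← Measure.prod_restrict, Measure.restrict_univ]
  rw [h1, lintegral_prod _ (hgm.abs.ennreal_ofReal).aemeasurable] at hfin
  have hFm : Measurable (fun z => ∫⁻ ξ, ENNReal.ofReal |g (z, ξ)|) :=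
    Measurable.lintegral_prod_right (hgm.abs.ennreal_ofReal)
  have hae := ae_lt_top hFm hfin
  filter_upwards [hae] with z hz
  refine ⟨(hgm.comp measurable_prodMk_left).aestronglyMeasurable, ?_⟩
  rw [HasFiniteIntegral]
  calc (∫⁻ ξ, (‖g (z, ξ)‖₊ : ℝ≥0∞)) = ∫⁻ ξ, ENNReal.ofReal |g (z, ξ)| := by
        apply lintegral_congr
        intro ξ
        rw [ofReal_abs]
    _ < ⊤ := hz

lemma open_cover (Q : Set Em) (hQ : IsOpen Q) :
    ∃ Kc : ℕ → Set Em, (∀ j, IsCompact (Kc j)) ∧ (∀ j, Kc j ⊆ Q) ∧ (⋃ j, Kc j) = Q := by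
  haveI : LocallyCompactSpace Q := hQ.locallyCompactSpace
  refine ⟨fun j => Subtype.val '' compactCovering Q j,
    fun j => (isCompact_compactCovering Q j).image continuous_subtype_val,
    fun j => by rintro z ⟨w, _, rfl⟩; exact w.2, ?_⟩
  rw [← Set.image_iUnion, iUnion_compactCovering, Set.image_univ, Subtype.range_coe]

lemma ae_restrict_of_cover {P : Em → Prop} (Q : Set Em) (hQm : MeasurableSet Q)
    (Kc : ℕ → Set Em) (hKcm : ∀ j, MeasurableSet (Kc j)) (hcov : (⋃ j, Kc j) = Q)
    (h : ∀ j, ∀ᵐ z ∂(volume.restrict (Kc j)), P z) :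
    ∀ᵐ z ∂(volume.restrict Q), P z := by
  rw [ae_iff, Measure.restrict_apply' hQm, ← hcov, Set.inter_iUnion]
  apply measure_iUnion_null
  intro j
  rw [← Measure.restrict_apply' (hKcm j), ← ae_iff]
  exact h j

set_option maxHeartbeats 1000000 in
lemma partIV_K (Q : Set Em)
    (u : ℕ → Em → ℝ) (hum : ∀ n, Measurable (u n))
    (ubar : Em → ℝ) (hubarm : Measurable ubar)
    (g : Em × ℝ → ℝ) (hgm : Measurable g) (hgb : ∃ C : ℝ, ∀ p, |g p| ≤ C)
    (hwkchi : ∀ ψ : Em × ℝ → ℝ,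
      Integrable ψ (volume.restrict (Q ×ˢ (Set.univ : Set ℝ))) →
        Filter.Tendsto (fun n => ∫ p in Q ×ˢ (Set.univ : Set ℝ),
            kineticChi p.2 (u n p.1) * ψ p) Filter.atTop
          (nhds (∫ p in Q ×ˢ (Set.univ : Set ℝ), g p * ψ p)))
    (K : Set Em) (hK : IsCompact K) (hKQ : K ⊆ Q)
    (huint : ∀ n, IntegrableOn (u n) K) (hubarint : IntegrableOn ubar K)
    (huiK : ∀ ε : ℝ, 0 < ε → ∃ c : ℝ, ∀ n,
      (∫ z in {z ∈ K | c ≤ |u n z|}, |u n z|) < ε)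
    (hwkK : ∀ φ : Em → ℝ, Measurable φ → (∃ C : ℝ, ∀ z, |φ z| ≤ C) →
      Filter.Tendsto (fun n => ∫ z in K, u n z * φ z) Filter.atTop
        (nhds (∫ z in K, ubar z * φ z)))
    (hfin : (∫⁻ p in K ×ˢ (Set.univ : Set ℝ), ENNReal.ofReal |g p|) ≠ ⊤) :
    ∀ᵐ z ∂(volume.restrict K), (∫ ξ : ℝ, g (z, ξ)) = ubar z := by
  obtain ⟨Cg, hCg⟩ := hgb
  have hKm := hK.measurableSet
  have hKfin : volume K < ∞ := hK.measure_lt_top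
  haveI : IsFiniteMeasure ((volume : Measure Em).restrict K) :=
    ⟨by rwa [Measure.restrict_apply_univ]⟩
  -- product decomposition
  have hprodK : (volume : Measure (Em × ℝ)).restrict (K ×ˢ (Set.univ : Set ℝ))
      = ((volume : Measure Em).restrict K).prod (volume : Measure ℝ) := by
    rw [Measure.volume_eq_prod, ← Measure.prod_restrict, Measure.restrict_univ]
  set F : Em → ℝ≥0∞ := fun z => ∫⁻ ξ, ENNReal.ofReal |g (z, ξ)| with hFdef
  have hFm : Measurable F := Measurable.lintegral_prod_right (hgm.abs.ennreal_ofReal)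
  have hfin' : (∫⁻ z in K, F z) ≠ ⊤ := by
    rwa [hprodK, lintegral_prod _ (hgm.abs.ennreal_ofReal).aemeasurable] at hfin
  have haeF : ∀ᵐ z ∂(volume.restrict K), F z < ⊤ := ae_lt_top hFm hfin'
  set H : Em → ℝ := fun z => (F z).toReal with hHdef
  have hHm : Measurable H := hFm.ennreal_toReal
  have hHnn : ∀ z, 0 ≤ H z := fun z => ENNReal.toReal_nonneg
  -- integrability of each slice when F is finite
  have hslice : ∀ z, F z < ⊤ → Integrable (fun ξ => g (z, ξ)) := by
    intro z hz
    refine ⟨(hgm.comp measurable_prodMk_left).aestronglyMeasurable, ?_⟩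
    rw [HasFiniteIntegral]
    calc (∫⁻ ξ, (‖g (z, ξ)‖₊ : ℝ≥0∞)) = F z := by
          apply lintegral_congr; intro ξ; rw [← ofReal_abs]
      _ < ⊤ := hz
  have habs_eq : ∀ z, F z < ⊤ → (∫ ξ, |g (z, ξ)|) = H z := by
    intro z hz
    have h1 : ENNReal.ofReal (∫ ξ, |g (z, ξ)|) = F z := by
      rw [ofReal_integral_eq_lintegral_ofReal (hslice z hz).abs
        (Filter.Eventually.of_forall fun ξ => abs_nonneg _)]
    show _ = (F z).toReal
    rw [← h1, ENNReal.toReal_ofReal (integral_nonneg fun ξ => abs_nonneg _)]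
  -- H is integrable on K
  have hHint : IntegrableOn H K := by
    refine ⟨hHm.aestronglyMeasurable, ?_⟩
    rw [HasFiniteIntegral]
    have : (∫⁻ z in K, (‖H z‖₊ : ℝ≥0∞)) = ∫⁻ z in K, ENNReal.ofReal (H z) := by
      apply lintegral_congr; intro z; rw [← ofReal_abs, abs_of_nonneg (hHnn z)]
    rw [show (∫⁻ a in K, ‖H a‖ₑ) = ∫⁻ z in K, (‖H z‖₊ : ℝ≥0∞) from rfl, this]
    calc (∫⁻ z in K, ENNReal.ofReal (H z)) ≤ ∫⁻ z in K, F z := by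
          apply lintegral_mono
          intro z
          exact ENNReal.ofReal_toReal_le
      _ < ⊤ := lt_top_iff_ne_top.2 hfin'
  set G : Em → ℝ := fun z => ∫ ξ, g (z, ξ) with hGdef
  have hGm : Measurable G :=
    (hgm.stronglyMeasurable.integral_prod_right').measurable
  have hGabs : ∀ z, |G z| ≤ H z := by
    intro z
    by_cases hz : F z < ⊤
    · calc |G z| ≤ ∫ ξ, |g (z, ξ)| := by
            simpa [Real.norm_eq_abs] using
              norm_integral_le_integral_norm (fun ξ => g (z, ξ))
        _ = H z := habs_eq z hz
    · have : ¬ Integrable (fun ξ => g (z, ξ)) := by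
        intro hcon
        apply hz
        have : (∫⁻ ξ, (‖g (z, ξ)‖₊ : ℝ≥0∞)) < ⊤ := hcon.2
        calc F z = ∫⁻ ξ, (‖g (z, ξ)‖₊ : ℝ≥0∞) := by
              apply lintegral_congr; intro ξ; rw [ofReal_abs]
          _ < ⊤ := this
      have hG0 : G z = 0 := integral_undef this
      rw [hG0]
      simpa using hHnn z
  -- the key identity for all bounded measurable φ
  have key : ∀ φ : Em → ℝ, Measurable φ → ∀ Cφ : ℝ, (∀ z, |φ z| ≤ Cφ) →
      (∫ z in K, G z * φ z) = ∫ z in K, ubar z * φ z := by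
    intro φ hφm Cφ hCφ
    have hCφ0 : 0 ≤ Cφ := le_trans (abs_nonneg _) (hCφ 0)
    -- G_R
    set GR : ℕ → Em → ℝ := fun R z => ∫ ξ in Set.Icc (-(R:ℝ)) R, g (z, ξ) with hGRdef
    have hGRm : ∀ R, Measurable (GR R) := fun R =>
      (hgm.stronglyMeasurable.integral_prod_right').measurable
    -- Step A : for every R, ∫ K GR·φ is the limit of truncated integrals
    have stepA : ∀ R : ℕ, Filter.Tendsto
        (fun n => ∫ z in K, (∫ ξ in Set.Icc (-(R:ℝ)) R, kineticChi ξ (u n z)) * φ z)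
        Filter.atTop (nhds (∫ z in K, GR R z * φ z)) := by
      intro R
      set SR : Set (Em × ℝ) := K ×ˢ Set.Icc (-(R:ℝ)) R with hSRdef
      have hSRm : MeasurableSet SR := hKm.prod measurableSet_Icc
      have hSRsub : SR ⊆ Q ×ˢ (Set.univ : Set ℝ) := Set.prod_mono hKQ (Set.subset_univ _)
      have hSRfin : volume SR < ∞ := by
        rw [hSRdef, Measure.volume_eq_prod, Measure.prod_prod]
        exact ENNReal.mul_lt_top hKfin (by simp [Real.volume_Icc])
      have hprodSR : (volume : Measure (Em × ℝ)).restrict SR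
          = ((volume : Measure Em).restrict K).prod
            ((volume : Measure ℝ).restrict (Set.Icc (-(R:ℝ)) R)) := by
        rw [hSRdef, Measure.volume_eq_prod, ← Measure.prod_restrict]
      haveI : IsFiniteMeasure ((volume : Measure ℝ).restrict (Set.Icc (-(R:ℝ)) R)) :=
        ⟨by rw [Measure.restrict_apply_univ]; simp [Real.volume_Icc]⟩
      set ψ : Em × ℝ → ℝ := SR.indicator (fun p => φ p.1) with hψdef
      have hψint : Integrable ψ (volume.restrict (Q ×ˢ (Set.univ : Set ℝ))) := by
        rw [hψdef, integrable_indicator_iff hSRm]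
        unfold IntegrableOn
        rw [Measure.restrict_restrict hSRm, Set.inter_eq_left.2 hSRsub]
        apply Integrable.mono' (integrableOn_const (hSRfin).ne :
          IntegrableOn (fun _ => Cφ) SR _)
          ((hφm.comp measurable_fst).aestronglyMeasurable)
        exact Filter.Eventually.of_forall fun p => by
          simpa [Real.norm_eq_abs] using hCφ p.1
      have key0 := hwkchi ψ hψint
      -- rewrite both sides restricted to SR
      have eindic : ∀ Fn : Em × ℝ → ℝ, (∫ p in Q ×ˢ (Set.univ : Set ℝ), Fn p * ψ p)
          = ∫ p in SR, Fn p * φ p.1 := by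
        intro Fn
        have : ∀ p, Fn p * ψ p = SR.indicator (fun p => Fn p * φ p.1) p := by
          intro p
          by_cases hp : p ∈ SR
          · simp [hψdef, hp, Set.indicator_of_mem]
          · simp [hψdef, hp]
        rw [integral_congr_ae (Filter.Eventually.of_forall this),
          setIntegral_indicator hSRm, Set.inter_eq_right.2 hSRsub]
      -- Fubini on the limit side
      have elimit : (∫ p in SR, g p * φ p.1) = ∫ z in K, GR R z * φ z := by
        have hint : Integrable (fun p : Em × ℝ => g p * φ p.1)
            (((volume : Measure Em).restrict K).prod
              ((volume : Measure ℝ).restrict (Set.Icc (-(R:ℝ)) R))) := by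
          apply Integrable.mono' (integrable_const (Cg * Cφ))
            ((hgm.mul (hφm.comp measurable_fst)).aestronglyMeasurable)
          apply Filter.Eventually.of_forall
          intro p
          rw [Real.norm_eq_abs, Pi.mul_apply, abs_mul]
          exact mul_le_mul (hCg p) (hCφ p.1) (abs_nonneg _) (le_trans (abs_nonneg _) (hCg p))
        rw [hprodSR, integral_prod _ hint]
        congr 1
        funext z
        rw [← integral_mul_const]
      -- Fubini on the approximant side
      have eapprox : ∀ n, (∫ p in SR, kineticChi p.2 (u n p.1) * φ p.1)
          = ∫ z in K, (∫ ξ in Set.Icc (-(R:ℝ)) R, kineticChi ξ (u n z)) * φ z := by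
        intro n
        have hint : Integrable (fun p : Em × ℝ => kineticChi p.2 (u n p.1) * φ p.1)
            (((volume : Measure Em).restrict K).prod
              ((volume : Measure ℝ).restrict (Set.Icc (-(R:ℝ)) R))) := by
          apply Integrable.mono' (integrable_const (1 * Cφ))
            (((measurable_chiu (hum n)).mul (hφm.comp measurable_fst)).aestronglyMeasurable)
          apply Filter.Eventually.of_forall
          intro p
          rw [Real.norm_eq_abs, Pi.mul_apply, abs_mul]
          exact mul_le_mul (abs_chi_le_one _ _) (hCφ p.1) (abs_nonneg _) zero_le_one
        rw [hprodSR, integral_prod _ hint]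
        congr 1
        funext z
        rw [← integral_mul_const]
      have e1 := eindic (fun p => g p)
      rw [e1, elimit] at key0
      exact key0.congr (fun n => by rw [eindic, eapprox])
    -- Step B : uniform bound
    have stepB : ∀ δ : ℝ, 0 < δ → ∃ c : ℝ, ∀ R : ℕ, c ≤ (R:ℝ) →
        |(∫ z in K, GR R z * φ z) - ∫ z in K, ubar z * φ z| ≤ Cφ * δ := by
      intro δ hδ
      obtain ⟨c, hc⟩ := huiK δ hδ
      refine ⟨c, fun R hcR => ?_⟩
      -- per-n estimate
      have hn : ∀ n, |(∫ z in K, (∫ ξ in Set.Icc (-(R:ℝ)) R, kineticChi ξ (u n z)) * φ z)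
          - ∫ z in K, u n z * φ z| ≤ Cφ * δ := by
        intro n
        set T : Em → ℝ := fun z => ∫ ξ in Set.Icc (-(R:ℝ)) R, kineticChi ξ (u n z) with hTdef
        have hTm : Measurable T :=
          ((measurable_chiu (hum n)).stronglyMeasurable.integral_prod_right').measurable
        have hTbd : ∀ z, |T z| ≤ (volume (Set.Icc (-(R:ℝ)) R)).toReal := by
          intro z
          calc |T z| ≤ ∫ ξ in Set.Icc (-(R:ℝ)) R, |kineticChi ξ (u n z)| := by
                simpa [Real.norm_eq_abs] using norm_integral_le_integral_norm
                  (μ := volume.restrict (Set.Icc (-(R:ℝ)) R)) (fun ξ => kineticChi ξ (u n z))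
            _ ≤ ∫ _ in Set.Icc (-(R:ℝ)) R, (1:ℝ) := by
                apply setIntegral_mono_on _ _ measurableSet_Icc
                · exact fun ξ _ => abs_chi_le_one _ _
                · haveI : IsFiniteMeasure ((volume : Measure ℝ).restrict
                      (Set.Icc (-(R:ℝ)) R)) :=
                    ⟨by rw [Measure.restrict_apply_univ]; simp [Real.volume_Icc]⟩
                  apply Integrable.mono' (integrable_const (1:ℝ))
                    ((measurable_chiu (hum n)).comp
                      (measurable_const.prodMk measurable_id)).abs.aestronglyMeasurable
                  exact Filter.Eventually.of_forall fun ξ => by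
                    simpa [Real.norm_eq_abs, abs_abs] using abs_chi_le_one ξ (u n z)
                · haveI : IsFiniteMeasure ((volume : Measure ℝ).restrict
                      (Set.Icc (-(R:ℝ)) R)) :=
                    ⟨by rw [Measure.restrict_apply_univ]; simp [Real.volume_Icc]⟩
                  exact integrable_const _
            _ = (volume (Set.Icc (-(R:ℝ)) R)).toReal := by simp
        have hTint : IntegrableOn T K := by
          apply Integrable.mono' (integrable_const ((volume (Set.Icc (-(R:ℝ)) R)).toReal))
            hTm.aestronglyMeasurable
          exact Filter.Eventually.of_forall fun z => by
            simpa [Real.norm_eq_abs] using hTbd z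
        have hTφint : IntegrableOn (fun z => T z * φ z) K := by
          apply Integrable.mono' (hTint.abs.mul_const Cφ)
            (hTm.mul hφm).aestronglyMeasurable
          apply Filter.Eventually.of_forall
          intro z
          rw [Real.norm_eq_abs, Pi.mul_apply, abs_mul]
          exact mul_le_mul_of_nonneg_left (hCφ z) (abs_nonneg _)
        have huφint : IntegrableOn (fun z => u n z * φ z) K := by
          apply Integrable.mono' ((huint n).abs.mul_const Cφ)
            ((hum n).mul hφm).aestronglyMeasurable
          apply Filter.Eventually.of_forall
          intro z
          rw [Real.norm_eq_abs, Pi.mul_apply, abs_mul]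
          exact mul_le_mul_of_nonneg_left (hCφ z) (abs_nonneg _)
        rw [← integral_sub hTφint huφint]
        have e2 : ∀ z, T z * φ z - u n z * φ z = (T z - u n z) * φ z := by
          intro z; ring
        rw [integral_congr_ae (Filter.Eventually.of_forall e2)]
        -- bound the integral
        set D : Em → ℝ := fun z => |T z - u n z| with hDdef
        have hDnn : ∀ z, 0 ≤ D z := fun z => abs_nonneg _
        have hDint : IntegrableOn D K := (hTint.sub (huint n)).abs
        have hDbd : ∀ z, D z ≤ if (R:ℝ) ≤ |u n z| then |u n z| else 0 :=
          fun z => trunc_diff (Nat.cast_nonneg R) (u n z)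
        have hintD : (∫ z in K, D z) ≤ δ := by
          set B : Set Em := {z | c ≤ |u n z|} with hBdef
          have hBm : MeasurableSet B := measurableSet_le measurable_const (hum n).abs
          have hsplit := integral_add_compl hBm (hDint :
            Integrable D (volume.restrict K))
          have ec : ∫ z in Bᶜ, D z ∂(volume.restrict K) = 0 := by
            rw [setIntegral_congr_fun hBm.compl (g := fun _ => (0:ℝ))]
            · simp
            · intro z hz
              simp only [hBdef, Set.mem_compl_iff, Set.mem_setOf_eq, not_le] at hz
              have h0 : ¬ ((R:ℝ) ≤ |u n z|) := by
                push_neg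
                calc |u n z| < c := hz
                  _ ≤ (R:ℝ) := hcR
              have := hDbd z
              rw [if_neg h0] at this
              exact le_antisymm this (hDnn z)
          have eb : ∫ z in B, D z ∂(volume.restrict K)
              ≤ ∫ z in {z ∈ K | c ≤ |u n z|}, |u n z| := by
            have e3 : (volume.restrict K).restrict B = volume.restrict {z ∈ K | c ≤ |u n z|} := by
              rw [Measure.restrict_restrict hBm]
              congr 1
              rw [Set.inter_comm]
              rfl
            rw [show (∫ z in B, D z ∂(volume.restrict K))
              = ∫ z, D z ∂((volume.restrict K).restrict B) from rfl, e3]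
            apply setIntegral_mono_on
            · have h4 := hDint.integrableOn (s := B)
              unfold IntegrableOn at h4 ⊢
              rwa [e3] at h4
            · exact MeasureTheory.IntegrableOn.mono_set
                ((huint n).abs : IntegrableOn (fun z => |u n z|) K volume)
                (fun z hz => hz.1)
            · exact hKm.inter hBm
            · intro z hz
              have h1 : (R:ℝ) ≤ |u n z| ∨ ¬ ((R:ℝ) ≤ |u n z|) := em _
              rcases h1 with h1 | h1
              · exact (hDbd z).trans (by rw [if_pos h1])
              · exact (hDbd z).trans (by rw [if_neg h1]; exact abs_nonneg _)
          calc (∫ z in K, D z) = ∫ z in B, D z ∂(volume.restrict K)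
                + ∫ z in Bᶜ, D z ∂(volume.restrict K) := hsplit.symm
            _ = ∫ z in B, D z ∂(volume.restrict K) := by rw [ec, add_zero]
            _ ≤ ∫ z in {z ∈ K | c ≤ |u n z|}, |u n z| := eb
            _ ≤ δ := (hc n).le
        calc |∫ z in K, (T z - u n z) * φ z|
            ≤ ∫ z in K, |(T z - u n z) * φ z| := by
              have h5 := norm_integral_le_integral_norm
                (μ := volume.restrict K) (fun z => (T z - u n z) * φ z)
              simpa only [Real.norm_eq_abs] using h5
          _ ≤ ∫ z in K, D z * Cφ := by
              have hprod_int : IntegrableOn (fun z => (T z - u n z) * φ z) K := by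
                apply Integrable.mono' (hDint.mul_const Cφ)
                  (((hTm.sub (hum n)).mul hφm).aestronglyMeasurable)
                apply Filter.Eventually.of_forall
                intro z
                rw [Real.norm_eq_abs, Pi.mul_apply, abs_mul]
                exact mul_le_mul_of_nonneg_left (hCφ z) (abs_nonneg _)
              apply integral_mono hprod_int.abs (hDint.mul_const Cφ)
              intro z
              show |(T z - u n z) * φ z| ≤ D z * Cφ
              rw [abs_mul]
              exact mul_le_mul_of_nonneg_left (hCφ z) (abs_nonneg _)
          _ = Cφ * ∫ z in K, D z := by rw [integral_mul_const, mul_comm]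
          _ ≤ Cφ * δ := mul_le_mul_of_nonneg_left hintD hCφ0
      -- pass to the limit in n
      have htd1 := stepA R
      have htd2 := hwkK φ hφm ⟨Cφ, hCφ⟩
      have htd3 := (htd1.sub htd2).abs
      apply le_of_tendsto htd3
      exact Filter.Eventually.of_forall hn
    -- Step C : GR·φ tends to G·φ
    have stepC : Filter.Tendsto (fun R : ℕ => ∫ z in K, GR R z * φ z) Filter.atTop
        (nhds (∫ z in K, G z * φ z)) := by
      apply tendsto_integral_of_dominated_convergence (fun z => H z * Cφ)
        (fun R => ((hGRm R).mul hφm).aestronglyMeasurable)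
        (hHint.mul_const Cφ)
      · intro R
        filter_upwards [haeF] with z hz
        rw [Real.norm_eq_abs, Pi.mul_apply, abs_mul]
        have h1 : |GR R z| ≤ H z := by
          calc |GR R z| ≤ ∫ ξ in Set.Icc (-(R:ℝ)) R, |g (z, ξ)| := by
                simpa [Real.norm_eq_abs] using norm_integral_le_integral_norm
                  (μ := volume.restrict (Set.Icc (-(R:ℝ)) R)) (fun ξ => g (z, ξ))
            _ ≤ ∫ ξ, |g (z, ξ)| := by
                apply setIntegral_le_integral (hslice z hz).abs
                exact Filter.Eventually.of_forall fun ξ => abs_nonneg _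
            _ = H z := habs_eq z hz
        exact mul_le_mul h1 (hCφ z) (abs_nonneg _) (hHnn z)
      · filter_upwards [haeF] with z hz
        have hint := hslice z hz
        have htd : Filter.Tendsto (fun R : ℕ => GR R z) Filter.atTop (nhds (G z)) := by
          have hun : (⋃ R : ℕ, Set.Icc (-(R:ℝ)) R) = Set.univ := by
            ext ξ
            simp only [Set.mem_iUnion, Set.mem_Icc, Set.mem_univ, iff_true]
            obtain ⟨R, hR⟩ := exists_nat_ge |ξ|
            exact ⟨R, (abs_le.1 hR).1, (abs_le.1 hR).2⟩
          have := tendsto_setIntegral_of_monotone (fun R : ℕ => measurableSet_Icc :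
              ∀ R : ℕ, MeasurableSet (Set.Icc (-(R:ℝ)) R))
            (fun a b hab => Set.Icc_subset_Icc (by simp; exact_mod_cast hab)
              (by exact_mod_cast hab)) (by rw [hun]; exact hint.integrableOn)
          rwa [hun, Measure.restrict_univ] at this
        exact htd.mul_const (φ z)
    -- Step D : conclude the identity
    have habs0 : ∀ δ : ℝ, 0 < δ →
        |(∫ z in K, G z * φ z) - ∫ z in K, ubar z * φ z| ≤ Cφ * δ := by
      intro δ hδ
      obtain ⟨c, hc⟩ := stepB δ hδ
      have htd := ((stepC.sub tendsto_const_nhds).abs :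
        Filter.Tendsto (fun R : ℕ => |(∫ z in K, GR R z * φ z) - ∫ z in K, ubar z * φ z|)
          Filter.atTop (nhds |(∫ z in K, G z * φ z) - ∫ z in K, ubar z * φ z|))
      apply le_of_tendsto htd
      obtain ⟨R0, hR0⟩ := exists_nat_ge c
      refine Filter.eventually_atTop.2 ⟨R0, fun R hR => hc R ?_⟩
      calc c ≤ (R0:ℝ) := hR0
        _ ≤ (R:ℝ) := by exact_mod_cast hR
    have hdiff : (∫ z in K, G z * φ z) - (∫ z in K, ubar z * φ z) = 0 := by
      rw [← abs_eq_zero]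
      by_contra hne
      have hpos : 0 < |(∫ z in K, G z * φ z) - ∫ z in K, ubar z * φ z| :=
        lt_of_le_of_ne (abs_nonneg _) (Ne.symm hne)
      set x := |(∫ z in K, G z * φ z) - ∫ z in K, ubar z * φ z| with hx
      have := habs0 (x / (Cφ + 1)) (by positivity)
      have hlt : Cφ * (x / (Cφ + 1)) < x := by
        rw [mul_div_assoc']
        rw [div_lt_iff₀ (by linarith)]
        nlinarith
      linarith
    linarith [hdiff]
  -- apply with φ = sign (G - ubar)
  set φ : Em → ℝ := fun z => mySign (G z - ubar z) with hφdef
  have hφm : Measurable φ := mySign_measurable.comp (hGm.sub hubarm)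
  have hkey := key φ hφm 1 (fun z => abs_mySign _)
  have hGint : IntegrableOn G K := by
    apply Integrable.mono' hHint hGm.aestronglyMeasurable
    exact Filter.Eventually.of_forall fun z => by
      simpa [Real.norm_eq_abs] using hGabs z
  have hGφint : IntegrableOn (fun z => G z * φ z) K := by
    apply Integrable.mono' hHint (hGm.mul hφm).aestronglyMeasurable
    apply Filter.Eventually.of_forall
    intro z
    rw [Real.norm_eq_abs, Pi.mul_apply, abs_mul]
    calc |G z| * |φ z| ≤ |G z| * 1 := mul_le_mul_of_nonneg_left (abs_mySign _) (abs_nonneg _)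
      _ = |G z| := mul_one _
      _ ≤ H z := hGabs z
  have hubarφint : IntegrableOn (fun z => ubar z * φ z) K := by
    apply Integrable.mono' hubarint.abs (hubarm.mul hφm).aestronglyMeasurable
    apply Filter.Eventually.of_forall
    intro z
    rw [Real.norm_eq_abs, Pi.mul_apply, abs_mul]
    calc |ubar z| * |φ z| ≤ |ubar z| * 1 :=
        mul_le_mul_of_nonneg_left (abs_mySign _) (abs_nonneg _)
      _ = |ubar z| := mul_one _
  have hzero : (∫ z in K, |G z - ubar z|) = 0 := by
    have e1 : ∀ z, (G z - ubar z) * φ z = |G z - ubar z| := fun z => mul_mySign _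
    calc (∫ z in K, |G z - ubar z|) = ∫ z in K, (G z - ubar z) * φ z := by
          apply integral_congr_ae (Filter.Eventually.of_forall fun z => (e1 z).symm)
      _ = (∫ z in K, G z * φ z) - ∫ z in K, ubar z * φ z := by
          rw [← integral_sub hGφint hubarφint]
          apply integral_congr_ae (Filter.Eventually.of_forall fun z => by ring)
      _ = 0 := by rw [hkey]; ring
  have hint2 : IntegrableOn (fun z => |G z - ubar z|) K := (hGint.sub hubarint).abs
  have := (integral_eq_zero_iff_of_nonneg_ae
    (Filter.Eventually.of_forall fun z => abs_nonneg (G z - ubar z)) hint2).1 hzero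
  filter_upwards [this] with z hz
  have : |G z - ubar z| = 0 := hz
  have := abs_eq_zero.1 this
  linarith [this]

/-- Representation of weak `L¹` limits via the weak-* limit `g` of the kinetic
functions `χ(ξ, uⁿ)`: `g` has values in `[0,1]` for `ξ ≥ 0` and `[−1,0]` for `ξ ≤ 0`,
`∫∫_K |g| ≤ liminf ∫_K |uⁿ|` on every compact `K ⊆ Q` (so `g(z,·) ∈ L¹_ξ` a.e.), and
`∫_ℝ g(z,ξ) dξ = u(z)` a.e., where `u` is the weak `L¹` limit of `uⁿ`. -/
theorem kinetic_function_represents_weak_limit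
    {m : ℕ} (Q : Set (EuclideanSpace ℝ (Fin m))) (hQ : IsOpen Q)
    (u : ℕ → EuclideanSpace ℝ (Fin m) → ℝ) (hum : ∀ n, Measurable (u n))
    (ubar : EuclideanSpace ℝ (Fin m) → ℝ) (hubarm : Measurable ubar)
    (hint : ∀ K : Set (EuclideanSpace ℝ (Fin m)), IsCompact K → K ⊆ Q →
      (∀ n, IntegrableOn (u n) K) ∧ IntegrableOn ubar K)
    (hui : ∀ K : Set (EuclideanSpace ℝ (Fin m)), IsCompact K → K ⊆ Q →
      ∀ ε : ℝ, 0 < ε → ∃ c : ℝ, ∀ n,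
        (∫ z in {z ∈ K | c ≤ |u n z|}, |u n z|) < ε)
    (hwk : ∀ K : Set (EuclideanSpace ℝ (Fin m)), IsCompact K → K ⊆ Q →
      ∀ φ : EuclideanSpace ℝ (Fin m) → ℝ, Measurable φ → (∃ C : ℝ, ∀ z, |φ z| ≤ C) →
        Filter.Tendsto (fun n => ∫ z in K, u n z * φ z) Filter.atTop
          (nhds (∫ z in K, ubar z * φ z)))
    (g : EuclideanSpace ℝ (Fin m) × ℝ → ℝ) (hgm : Measurable g)
    (hgb : ∃ C : ℝ, ∀ p, |g p| ≤ C)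
    (hwkchi : ∀ ψ : EuclideanSpace ℝ (Fin m) × ℝ → ℝ,
      Integrable ψ (volume.restrict (Q ×ˢ (Set.univ : Set ℝ))) →
        Filter.Tendsto (fun n => ∫ p in Q ×ˢ (Set.univ : Set ℝ),
            kineticChi p.2 (u n p.1) * ψ p) Filter.atTop
          (nhds (∫ p in Q ×ˢ (Set.univ : Set ℝ), g p * ψ p))) :
    (∀ᵐ p ∂(volume.restrict (Q ×ˢ (Set.univ : Set ℝ))),
      (0 ≤ p.2 → 0 ≤ g p ∧ g p ≤ 1) ∧ (p.2 ≤ 0 → -1 ≤ g p ∧ g p ≤ 0)) ∧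
    (∀ K : Set (EuclideanSpace ℝ (Fin m)), IsCompact K → K ⊆ Q →
      (∫⁻ p in K ×ˢ (Set.univ : Set ℝ), ENNReal.ofReal |g p|) ≤
        Filter.liminf (fun n => ∫⁻ z in K, ENNReal.ofReal |u n z|) Filter.atTop) ∧
    (∀ᵐ z ∂(volume.restrict Q), Integrable (fun ξ : ℝ => g (z, ξ))) ∧
    (∀ᵐ z ∂(volume.restrict Q), (∫ ξ : ℝ, g (z, ξ)) = ubar z) := by
  have hQm : MeasurableSet Q := hQ.measurableSet
  -- finiteness of the `g`-lintegral over every compact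
  have hfinK : ∀ K : Set (EuclideanSpace ℝ (Fin m)), IsCompact K → K ⊆ Q →
      (∫⁻ p in K ×ˢ (Set.univ : Set ℝ), ENNReal.ofReal |g p|) ≠ ⊤ := by
    intro K hK hKQ
    obtain ⟨c, hc⟩ := hui K hK hKQ 1 one_pos
    have hbd := lintegral_bound K hK u hum (hint K hK hKQ).1 c hc
    have h2 := partII Q u hum g hgm hgb hwkchi K hK hKQ
    have h3 : Filter.liminf (fun n => ∫⁻ z in K, ENNReal.ofReal |u n z|) Filter.atTop
        ≤ ENNReal.ofReal (1 + max c 0 * (volume K).toReal) := by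
      calc Filter.liminf (fun n => ∫⁻ z in K, ENNReal.ofReal |u n z|) Filter.atTop
          ≤ Filter.liminf (fun _ : ℕ => ENNReal.ofReal (1 + max c 0 * (volume K).toReal))
            Filter.atTop := Filter.liminf_le_liminf (Filter.Eventually.of_forall hbd)
        _ = ENNReal.ofReal (1 + max c 0 * (volume K).toReal) := Filter.liminf_const _
    exact ne_top_of_le_ne_top (by exact ENNReal.ofReal_ne_top) (h2.trans h3)
  obtain ⟨Kc, hKc_cpt, hKc_sub, hKc_cov⟩ := open_cover Q hQ
  refine ⟨partI Q hQm u hum g hgm hgb hwkchi,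
    fun K hK hKQ => partII Q u hum g hgm hgb hwkchi K hK hKQ, ?_, ?_⟩
  · apply ae_restrict_of_cover Q hQm Kc (fun j => (hKc_cpt j).measurableSet) hKc_cov
    intro j
    exact partIII_K g hgm (Kc j) (hKc_cpt j).measurableSet
      (hfinK (Kc j) (hKc_cpt j) (hKc_sub j))
  · apply ae_restrict_of_cover Q hQm Kc (fun j => (hKc_cpt j).measurableSet) hKc_cov
    intro j
    exact partIV_K Q u hum ubar hubarm g hgm hgb hwkchi (Kc j) (hKc_cpt j) (hKc_sub j)
      (hint (Kc j) (hKc_cpt j) (hKc_sub j)).1 (hint (Kc j) (hKc_cpt j) (hKc_sub j)).2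
      (hui (Kc j) (hKc_cpt j) (hKc_sub j)) (hwk (Kc j) (hKc_cpt j) (hKc_sub j))
      (hfinK (Kc j) (hKc_cpt j) (hKc_sub j))
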